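/- Let H be a complex Hilbert space, G a selfadjoint continuous linear operator on H, h a nonzero real number, and K : ℝ → (H →L[ℂ] H) a family of continuous linear operators such that K(x) is selfadjoint for every x ∈ ℝ. If ψ₁, ψ₂ : ℝ → H are differentiable and satisfy the Schroedinger-type equation K(x)(ψⱼ(x)) = −i·h·G(ψⱼ'(x)) for all x ∈ ℝ and j = 1, 2, then the function x ↦ ⟪ψ₁(x), G(ψ₂(x))⟫ is constant on ℝ. -/

import Mathlib

open scoped ComplexInnerProductSpace

/-- Conservation law `(Ψ₁, G Ψ₂) = const` for the Schroedinger-type equation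
`K Ψ = −i h G ∂ₓΨ` with selfadjoint `K(x)` and `G`. -/
theorem flux_conservation
    {H : Type*} [NormedAddCommGroup H] [InnerProductSpace ℂ H] [CompleteSpace H]
    (G : H →L[ℂ] H) (hG : ∀ f g : H, ⟪G f, g⟫ = ⟪f, G g⟫)
    (h : ℝ) (hh : h ≠ 0)
    (K : ℝ → (H →L[ℂ] H)) (hK : ∀ x : ℝ, ∀ f g : H, ⟪K x f, g⟫ = ⟪f, K x g⟫)
    (ψ₁ ψ₂ ψ₁' ψ₂' : ℝ → H)
    (hψ₁ : ∀ x : ℝ, HasDerivAt ψ₁ (ψ₁' x) x)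
    (hψ₂ : ∀ x : ℝ, HasDerivAt ψ₂ (ψ₂' x) x)
    (heq₁ : ∀ x : ℝ, K x (ψ₁ x) = (-Complex.I * (h : ℂ)) • G (ψ₁' x))
    (heq₂ : ∀ x : ℝ, K x (ψ₂ x) = (-Complex.I * (h : ℂ)) • G (ψ₂' x)) :
    ∀ x y : ℝ, ⟪ψ₁ x, G (ψ₂ x)⟫ = ⟪ψ₁ y, G (ψ₂ y)⟫ := by
  set a : ℂ := -Complex.I * (h : ℂ) with ha
  have ha0 : a ≠ 0 := by
    simp only [ha, ne_eq, neg_mul, neg_eq_zero, mul_eq_zero, Complex.I_ne_zero, false_or,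
      Complex.ofReal_eq_zero]
    exact hh
  have hconj : (starRingEnd ℂ) a = -a := by
    simp [ha, Complex.conj_I]
  have key : ∀ x : ℝ, HasDerivAt (fun t => ⟪ψ₁ t, G (ψ₂ t)⟫) 0 x := by
    intro x
    have h2 : HasDerivAt (fun t => G (ψ₂ t)) (G (ψ₂' x)) x := by
      simpa [Function.comp_def] using ((G.restrictScalars ℝ).hasFDerivAt (x := ψ₂ x)).comp_hasDerivAt x (hψ₂ x)
    have hd := (hψ₁ x).inner ℂ h2
    have e2 : G (ψ₂' x) = a⁻¹ • K x (ψ₂ x) := by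
      rw [heq₂ x, smul_smul, inv_mul_cancel₀ ha0, one_smul]
    have calc1 : ⟪ψ₁ x, G (ψ₂' x)⟫ = -⟪ψ₁' x, G (ψ₂ x)⟫ := by
      rw [e2, inner_smul_right, ← hK x, heq₁ x, inner_smul_left, hconj, ← hG, neg_mul, mul_neg, ← mul_assoc, inv_mul_cancel₀ ha0, one_mul]
    have : (⟪ψ₁ x, G (ψ₂' x)⟫ + ⟪ψ₁' x, G (ψ₂ x)⟫ : ℂ) = 0 := by
      rw [calc1]; ring
    rwa [this] at hd
  have hdiff : Differentiable ℝ (fun t => ⟪ψ₁ t, G (ψ₂ t)⟫) :=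
    fun x => (key x).differentiableAt
  have hderiv : ∀ x, deriv (fun t => ⟪ψ₁ t, G (ψ₂ t)⟫) x = 0 :=
    fun x => (key x).deriv
  exact fun x y => is_const_of_deriv_eq_zero hdiff hderiv x y
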